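/- arXiv:1907.05378 — 6 statements merged into one kernel-verified Lean document; each statement's English description precedes it below -/
import Mathlib

section
/- Let F : 2^[n] → ℝ be a submodular function with F(∅) = 0, let f be its Lovász extension, and let g(x) be the Lovász subgradient at x ∈ [0,1]^n. Then for all y ∈ [0,1]^n, ⟨g(x), x - y⟩ ≥ f(x) - f(y), i.e., g(x) is a subgradient of f at x. -/
open Finset

/-- A set function on subsets of `Fin n` is submodular (diminishing returns). -/
def Submodular {n : ℕ} (F : Finset (Fin n) → ℝ) : Prop :=
  ∀ ⦃A B : Finset (Fin n)⦄, A ⊆ B → ∀ i ∉ B,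
    F (insert i A) - F A ≥ F (insert i B) - F B

/-- `P` is the permutation consistent with `x`: coordinates in nonincreasing order,
ties broken by increasing index. -/
def Consistent {n : ℕ} (x : Fin n → ℝ) (P : Equiv.Perm (Fin n)) : Prop :=
  ∀ i j : Fin n, i ≤ j → x (P i) ≥ x (P j) ∧ (x (P i) = x (P j) → P i ≤ P j)

/-- `P[k] = {P_1, …, P_k}` (0-indexed: the images of positions `< k`). -/
def prefixSet {n : ℕ} (P : Equiv.Perm (Fin n)) (k : ℕ) : Finset (Fin n) :=
  (Finset.univ.filter (fun i : Fin n => (i : ℕ) < k)).image P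

/-- The Lovász extension of `F` at `x`, expressed via the permutation `P` consistent
with `x`. -/
def lovaszExt {n : ℕ} (F : Finset (Fin n) → ℝ) (P : Equiv.Perm (Fin n))
    (x : Fin n → ℝ) : ℝ :=
  ∑ i : Fin n, (F (prefixSet P ((i : ℕ) + 1)) - F (prefixSet P (i : ℕ))) * x (P i)

/-- The Lovász subgradient at `x`: `g(x)_{P_i} = F(P[i]) - F(P[i-1])`. -/
def lovaszGrad {n : ℕ} (F : Finset (Fin n) → ℝ) (P : Equiv.Perm (Fin n)) :
    Fin n → ℝ :=
  fun j => F (prefixSet P ((P.symm j : ℕ) + 1)) - F (prefixSet P ((P.symm j : ℕ)))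

lemma mem_prefixSet {n : ℕ} (P : Equiv.Perm (Fin n)) (k : ℕ) (j : Fin n) :
    j ∈ prefixSet P k ↔ (P.symm j : ℕ) < k := by
  simp only [prefixSet, mem_image, mem_filter, mem_univ, true_and]
  constructor
  · rintro ⟨i, hi, rfl⟩; simpa using hi
  · intro h; exact ⟨P.symm j, h, by simp⟩

lemma prefixSet_zero {n : ℕ} (P : Equiv.Perm (Fin n)) : prefixSet P 0 = ∅ := by
  ext j; simp [mem_prefixSet]

lemma prefixSet_top {n : ℕ} (P : Equiv.Perm (Fin n)) : prefixSet P n = univ := by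
  ext j; simp [mem_prefixSet, (P.symm j).isLt]

lemma not_mem_prefixSet_self {n : ℕ} (P : Equiv.Perm (Fin n)) (k : Fin n) :
    P k ∉ prefixSet P (k : ℕ) := by
  simp [mem_prefixSet]

lemma prefixSet_succ {n : ℕ} (P : Equiv.Perm (Fin n)) (k : Fin n) :
    prefixSet P ((k : ℕ) + 1) = insert (P k) (prefixSet P (k : ℕ)) := by
  ext j
  simp only [mem_prefixSet, mem_insert, Nat.lt_succ_iff_lt_or_eq]
  constructor
  · rintro (h | h)
    · exact Or.inr h
    · left; have : P.symm j = k := Fin.ext h; rw [← this]; simp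
  · rintro (rfl | h)
    · right; simp
    · exact Or.inl h

lemma grad_at_apply {n : ℕ} (F : Finset (Fin n) → ℝ) (P : Equiv.Perm (Fin n)) (k : Fin n) :
    lovaszGrad F P (P k) = F (prefixSet P ((k : ℕ) + 1)) - F (prefixSet P (k : ℕ)) := by
  simp [lovaszGrad]

/-- The subgradient lies in the base polytope: `∑_{j ∈ S} g_j ≤ F S`. -/
lemma sum_grad_le {n : ℕ} (F : Finset (Fin n) → ℝ) (hsub : Submodular F) (h0 : F ∅ = 0)
    (P : Equiv.Perm (Fin n)) (S : Finset (Fin n)) :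
    ∑ j ∈ S, lovaszGrad F P j ≤ F S := by
  have h1 : ∑ j ∈ S, lovaszGrad F P j
      = ∑ k : Fin n, (if P k ∈ S then lovaszGrad F P (P k) else 0) := by
    rw [← Finset.univ_inter S, ← Finset.sum_ite_mem]
    simp only [univ_inter]
    exact (Equiv.sum_comp P fun j => if j ∈ S then lovaszGrad F P j else 0).symm
  have h2 : ∀ k : Fin n, (if P k ∈ S then lovaszGrad F P (P k) else 0)
      ≤ F (S ∩ prefixSet P ((k : ℕ) + 1)) - F (S ∩ prefixSet P (k : ℕ)) := by
    intro k
    by_cases hk : P k ∈ S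
    · rw [if_pos hk, grad_at_apply]
      have hins : S ∩ prefixSet P ((k : ℕ) + 1)
          = insert (P k) (S ∩ prefixSet P (k : ℕ)) := by
        rw [prefixSet_succ]; ext j; simp only [mem_inter, mem_insert]
        constructor
        · rintro ⟨hj, rfl | h⟩
          · exact Or.inl rfl
          · exact Or.inr ⟨hj, h⟩
        · rintro (rfl | ⟨hj, h⟩)
          · exact ⟨hk, Or.inl rfl⟩
          · exact ⟨hj, Or.inr h⟩
      rw [hins]
      have hA : S ∩ prefixSet P (k : ℕ) ⊆ prefixSet P (k : ℕ) := inter_subset_right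
      have hsm := hsub hA (P k) (not_mem_prefixSet_self P k)
      rw [prefixSet_succ]
      linarith [hsm]
    · rw [if_neg hk]
      have : S ∩ prefixSet P ((k : ℕ) + 1) = S ∩ prefixSet P (k : ℕ) := by
        rw [prefixSet_succ]; ext j; simp only [mem_inter, mem_insert]
        constructor
        · rintro ⟨hj, rfl | h⟩
          · exact absurd hj hk
          · exact ⟨hj, h⟩
        · rintro ⟨hj, h⟩; exact ⟨hj, Or.inr h⟩
      rw [this]; simp
  calc ∑ j ∈ S, lovaszGrad F P j
      ≤ ∑ k : Fin n, (F (S ∩ prefixSet P ((k : ℕ) + 1)) - F (S ∩ prefixSet P (k : ℕ))) := by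
        rw [h1]; exact Finset.sum_le_sum fun k _ => h2 k
    _ = F S := by
        rw [Fin.sum_univ_eq_sum_range (fun k => F (S ∩ prefixSet P (k + 1)) - F (S ∩ prefixSet P k)),
          Finset.sum_range_sub (fun k => F (S ∩ prefixSet P k))]
        rw [prefixSet_top, prefixSet_zero]
        simp [h0]

/-- Abel-type inequality. -/
lemma abel_ineq (D t : ℕ → ℝ) (hD0 : D 0 = 0) (hD : ∀ k, 0 ≤ D k)
    (ht : ∀ k, t (k + 1) ≤ t k) (ht0 : ∀ k, 0 ≤ t k) (m : ℕ) :
    D m * t m ≤ ∑ k ∈ Finset.range m, (D (k + 1) - D k) * t k := by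
  induction m with
  | zero => simp [hD0]
  | succ m ih =>
      rw [Finset.sum_range_succ]
      have h1 : D (m + 1) * t (m + 1) ≤ D (m + 1) * t m :=
        mul_le_mul_of_nonneg_left (ht m) (hD _)
      nlinarith [ih, h1]

/-- The Lovász subgradient is a subgradient of the Lovász extension:
`⟨g(x), x - y⟩ ≥ f(x) - f(y)` for all `y ∈ [0,1]^n`. -/
theorem lovaszGrad_is_subgradient {n : ℕ} (F : Finset (Fin n) → ℝ)
    (hsub : Submodular F) (h0 : F ∅ = 0)
    (x y : Fin n → ℝ) (hx : ∀ i, x i ∈ Set.Icc (0 : ℝ) 1)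
    (hy : ∀ i, y i ∈ Set.Icc (0 : ℝ) 1)
    (P Q : Equiv.Perm (Fin n)) (hP : Consistent x P) (hQ : Consistent y Q) :
    ∑ i, lovaszGrad F P i * (x i - y i) ≥ lovaszExt F P x - lovaszExt F Q y := by
  have hgx : ∑ i, lovaszGrad F P i * x i = lovaszExt F P x := by
    rw [← Equiv.sum_comp P (fun j => lovaszGrad F P j * x j)]
    unfold lovaszExt lovaszGrad
    simp
  have hsplit : ∑ i, lovaszGrad F P i * (x i - y i)
      = ∑ i, lovaszGrad F P i * x i - ∑ i, lovaszGrad F P i * y i := by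
    rw [← Finset.sum_sub_distrib]
    congr 1; ext i; ring
  -- it suffices to show ⟨g, y⟩ ≤ f(y)
  suffices hgy : ∑ i, lovaszGrad F P i * y i ≤ lovaszExt F Q y by
    rw [hsplit, hgx]; linarith
  set t : ℕ → ℝ := fun k => if h : k < n then y (Q ⟨k, h⟩) else 0 with ht_def
  set D : ℕ → ℝ := fun k => F (prefixSet Q k) - ∑ j ∈ prefixSet Q k, lovaszGrad F P j
    with hD_def
  have hD0 : D 0 = 0 := by simp [hD_def, prefixSet_zero, h0]
  have hDnn : ∀ k, 0 ≤ D k := fun k => by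
    simp only [hD_def, sub_nonneg]; exact sum_grad_le F hsub h0 P _
  have ht0 : ∀ k, 0 ≤ t k := by
    intro k
    simp only [ht_def]
    split
    · exact (hy _).1
    · exact le_refl 0
  have htmono : ∀ k, t (k + 1) ≤ t k := by
    intro k
    by_cases h : k + 1 < n
    · have hk : k < n := Nat.lt_of_succ_lt h
      simp only [ht_def, dif_pos h, dif_pos hk]
      exact (hQ ⟨k, hk⟩ ⟨k + 1, h⟩ (by simp [Fin.le_def])).1
    · simp only [ht_def, dif_neg h]
      exact ht0 k
  have habel := abel_ineq D t hD0 hDnn htmono ht0 n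
  have htn : t n = 0 := by simp [ht_def]
  rw [htn, mul_zero] at habel
  -- identify the sum with f(y) - ⟨g, y⟩
  have hiden : ∑ k ∈ Finset.range n, (D (k + 1) - D k) * t k
      = lovaszExt F Q y - ∑ i, lovaszGrad F P i * y i := by
    have h1 : ∀ k : Fin n, (D ((k : ℕ) + 1) - D (k : ℕ)) * t (k : ℕ)
        = (F (prefixSet Q ((k : ℕ) + 1)) - F (prefixSet Q (k : ℕ))) * y (Q k)
          - lovaszGrad F P (Q k) * y (Q k) := by
      intro k
      have hG : ∑ j ∈ prefixSet Q ((k : ℕ) + 1), lovaszGrad F P j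
          = lovaszGrad F P (Q k) + ∑ j ∈ prefixSet Q (k : ℕ), lovaszGrad F P j := by
        rw [prefixSet_succ, Finset.sum_insert (not_mem_prefixSet_self Q k)]
      have htk : t (k : ℕ) = y (Q k) := by
        simp only [ht_def, dif_pos k.isLt, Fin.eta]
      rw [htk]
      simp only [hD_def, hG]
      ring
    rw [← Fin.sum_univ_eq_sum_range (fun k => (D (k + 1) - D k) * t k)]
    rw [Finset.sum_congr rfl (fun k _ => h1 k)]
    rw [Finset.sum_sub_distrib]
    congr 1
    exact Equiv.sum_comp Q (fun j => lovaszGrad F P j * y j)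
  rw [hiden] at habel
  linarith
end

section
/- Let F : 2^[n] → ℝ be a submodular function with F(∅) = 0 and let f be its Lovász extension. Then f is a convex function on [0,1]^n. -/
open Finset

namespace LovaszAux

variable {n : ℕ}

lemma mem_prefixSet (P : Equiv.Perm (Fin n)) (k : ℕ) (j : Fin n) :
    j ∈ prefixSet P k ↔ (P.symm j : ℕ) < k := by
  simp only [prefixSet, mem_image, mem_filter, mem_univ, true_and]
  constructor
  · rintro ⟨i, hi, rfl⟩; simpa using hi
  · intro h; exact ⟨P.symm j, h, P.apply_symm_apply j⟩

lemma prefixSet_zero (P : Equiv.Perm (Fin n)) : prefixSet P 0 = ∅ := by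
  ext j; simp [mem_prefixSet]

lemma prefixSet_top (P : Equiv.Perm (Fin n)) {k : ℕ} (hk : n ≤ k) :
    prefixSet P k = univ := by
  ext j; simp only [mem_prefixSet, mem_univ, iff_true]
  exact lt_of_lt_of_le (P.symm j).isLt hk

lemma prefixSet_succ (P : Equiv.Perm (Fin n)) {k : ℕ} (hk : k < n) :
    prefixSet P (k + 1) = insert (P ⟨k, hk⟩) (prefixSet P k) := by
  ext j
  simp only [mem_prefixSet, mem_insert, Nat.lt_succ_iff_lt_or_eq]
  constructor
  · rintro (h | h)
    · exact Or.inr h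
    · left; rw [← P.apply_symm_apply j]; congr 1; exact Fin.ext (by simp [h])
  · rintro (rfl | h)
    · right; simp
    · exact Or.inl h

lemma notMem_prefixSet (P : Equiv.Perm (Fin n)) {k : ℕ} (hk : k < n) :
    P ⟨k, hk⟩ ∉ prefixSet P k := by
  simp [mem_prefixSet]

/-- The Lovász extension is the inner product with the Lovász subgradient. -/
lemma lovaszExt_eq_sum (F : Finset (Fin n) → ℝ) (P : Equiv.Perm (Fin n))
    (x : Fin n → ℝ) :
    lovaszExt F P x = ∑ j : Fin n, lovaszGrad F P j * x j := by
  rw [lovaszExt, ← Equiv.sum_comp P (fun j => lovaszGrad F P j * x j)]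
  simp [lovaszGrad]

lemma sum_prefixSet (P : Equiv.Perm (Fin n)) (y : Fin n → ℝ) (k : ℕ) :
    ∑ j ∈ prefixSet P k, y j
      = ∑ i : Fin n, if (i : ℕ) < k then y (P i) else 0 := by
  have h1 : ∑ j ∈ prefixSet P k, y j
      = ∑ j : Fin n, if j ∈ prefixSet P k then y j else 0 := by
    rw [Finset.sum_ite_mem, Finset.univ_inter]
  rw [h1, ← Equiv.sum_comp P (fun j => if j ∈ prefixSet P k then y j else 0)]
  simp only [mem_prefixSet, Equiv.symm_apply_apply]

/-- Every prefix of the subgradient telescopes exactly. -/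
lemma grad_sum_prefix (F : Finset (Fin n) → ℝ) (P : Equiv.Perm (Fin n))
    {k : ℕ} (hk : k ≤ n) (h0 : F ∅ = 0) :
    ∑ j ∈ prefixSet P k, lovaszGrad F P j = F (prefixSet P k) := by
  rw [sum_prefixSet]
  have hterm : ∀ i : Fin n,
      (if (i : ℕ) < k then lovaszGrad F P (P i) else 0)
      = F (prefixSet P (min ((i : ℕ) + 1) k)) - F (prefixSet P (min (i : ℕ) k)) := by
    intro i
    by_cases h : (i : ℕ) < k
    · rw [if_pos h, min_eq_left h.le, min_eq_left (Nat.succ_le_of_lt h)]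
      simp [lovaszGrad]
    · rw [if_neg h, min_eq_right (le_of_not_gt h),
        min_eq_right (le_trans (le_of_not_gt h) (Nat.le_succ _)), sub_self]
  rw [Finset.sum_congr rfl (fun i _ => hterm i)]
  rw [Fin.sum_univ_eq_sum_range
    (fun m => F (prefixSet P (min (m + 1) k)) - F (prefixSet P (min m k)))]
  rw [Finset.sum_range_sub (fun m => F (prefixSet P (min m k)))]
  rw [min_eq_right hk, Nat.zero_min, prefixSet_zero, h0, sub_zero]

/-- The greedy subgradient lies in the submodular polytope: `g(S) ≤ F(S)`. -/
lemma grad_sum_le (F : Finset (Fin n) → ℝ) (hsub : Submodular F) (h0 : F ∅ = 0)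
    (Q : Equiv.Perm (Fin n)) (S : Finset (Fin n)) :
    ∑ j ∈ S, lovaszGrad F Q j ≤ F S := by
  have hrw : ∑ j ∈ S, lovaszGrad F Q j
      = ∑ i : Fin n, if Q i ∈ S then lovaszGrad F Q (Q i) else 0 := by
    have h1 : ∑ j ∈ S, lovaszGrad F Q j
        = ∑ j : Fin n, if j ∈ S then lovaszGrad F Q j else 0 := by
      rw [Finset.sum_ite_mem, Finset.univ_inter]
    rw [h1, ← Equiv.sum_comp Q (fun j => if j ∈ S then lovaszGrad F Q j else 0)]
  rw [hrw]
  have hbound : ∀ i : Fin n,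
      (if Q i ∈ S then lovaszGrad F Q (Q i) else 0)
      ≤ F (prefixSet Q ((i : ℕ) + 1) ∩ S) - F (prefixSet Q (i : ℕ) ∩ S) := by
    intro i
    by_cases h : Q i ∈ S
    · rw [if_pos h]
      have hins : prefixSet Q ((i : ℕ) + 1) ∩ S
          = insert (Q i) (prefixSet Q (i : ℕ) ∩ S) := by
        rw [prefixSet_succ Q i.isLt, Fin.eta, Finset.insert_inter_of_mem h]
      have hnm : Q i ∉ prefixSet Q (i : ℕ) := by
        have := notMem_prefixSet Q i.isLt; rwa [Fin.eta] at this
      have := hsub (Finset.inter_subset_left :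
        prefixSet Q (i : ℕ) ∩ S ⊆ prefixSet Q (i : ℕ)) (Q i) hnm
      rw [hins]
      have hg : lovaszGrad F Q (Q i)
          = F (insert (Q i) (prefixSet Q (i : ℕ))) - F (prefixSet Q (i : ℕ)) := by
        simp only [lovaszGrad, Equiv.symm_apply_apply]
        rw [prefixSet_succ Q i.isLt, Fin.eta]
      rw [hg]
      linarith [this]
    · rw [if_neg h]
      have : prefixSet Q ((i : ℕ) + 1) ∩ S = prefixSet Q (i : ℕ) ∩ S := by
        rw [prefixSet_succ Q i.isLt, Fin.eta, Finset.insert_inter_of_notMem h]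
      rw [this, sub_self]
  calc ∑ i : Fin n, (if Q i ∈ S then lovaszGrad F Q (Q i) else 0)
      ≤ ∑ i : Fin n, (F (prefixSet Q ((i : ℕ) + 1) ∩ S) - F (prefixSet Q (i : ℕ) ∩ S)) :=
        Finset.sum_le_sum (fun i _ => hbound i)
    _ = F S := by
        rw [Fin.sum_univ_eq_sum_range
          (fun m => F (prefixSet Q (m + 1) ∩ S) - F (prefixSet Q m ∩ S))]
        rw [Finset.sum_range_sub (fun m => F (prefixSet Q m ∩ S))]
        rw [prefixSet_top Q le_rfl, prefixSet_zero, Finset.univ_inter,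
          Finset.empty_inter, h0, sub_zero]

/-- The "level" value at position `k` (0 beyond the end). -/
noncomputable def lev (P : Equiv.Perm (Fin n)) (x : Fin n → ℝ) (k : ℕ) : ℝ :=
  if h : k < n then x (P ⟨k, h⟩) else 0

lemma lev_fin (P : Equiv.Perm (Fin n)) (x : Fin n → ℝ) (i : Fin n) :
    lev P x (i : ℕ) = x (P i) := by
  rw [lev, dif_pos i.isLt, Fin.eta]

/-- Abel summation: inner product written through prefix sums. -/
lemma abel_sum (P : Equiv.Perm (Fin n)) (x : Fin n → ℝ) (y : Fin n → ℝ) :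
    ∑ j : Fin n, y j * x j
      = ∑ k ∈ Finset.range n,
          (lev P x k - lev P x (k + 1)) * ∑ j ∈ prefixSet P (k + 1), y j := by
  have tail : ∀ m : ℕ, m < n →
      ∑ k ∈ Finset.range n, (if m ≤ k then lev P x k - lev P x (k + 1) else 0)
        = lev P x m := by
    intro m hm
    have hterm : ∀ k : ℕ,
        (if m ≤ k then lev P x k - lev P x (k + 1) else 0)
        = lev P x (max k m) - lev P x (max (k + 1) m) := by
      intro k
      by_cases h : m ≤ k
      · rw [if_pos h, max_eq_left h, max_eq_left (le_trans h (Nat.le_succ _))]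
      · rw [if_neg h, max_eq_right (le_of_not_ge h),
          max_eq_right (Nat.succ_le_of_lt (lt_of_not_ge h)), sub_self]
    rw [Finset.sum_congr rfl (fun k _ => hterm k)]
    rw [Finset.sum_range_sub' (fun k => lev P x (max k m))]
    rw [max_eq_right (Nat.zero_le m), max_eq_left hm.le]
    have hn : lev P x n = 0 := dif_neg (lt_irrefl n)
    rw [hn, sub_zero]
  symm
  calc ∑ k ∈ Finset.range n,
          (lev P x k - lev P x (k + 1)) * ∑ j ∈ prefixSet P (k + 1), y j
      = ∑ k ∈ Finset.range n, ∑ i : Fin n,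
          (if (i : ℕ) ≤ k then (lev P x k - lev P x (k + 1)) * y (P i) else 0) := by
        refine Finset.sum_congr rfl (fun k _ => ?_)
        rw [sum_prefixSet, Finset.mul_sum]
        refine Finset.sum_congr rfl (fun i _ => ?_)
        simp only [mul_ite, mul_zero, Nat.lt_succ_iff]
    _ = ∑ i : Fin n, ∑ k ∈ Finset.range n,
          (if (i : ℕ) ≤ k then (lev P x k - lev P x (k + 1)) * y (P i) else 0) :=
        Finset.sum_comm
    _ = ∑ i : Fin n,
          (∑ k ∈ Finset.range n,
            (if (i : ℕ) ≤ k then lev P x k - lev P x (k + 1) else 0)) * y (P i) := by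
        refine Finset.sum_congr rfl (fun i _ => ?_)
        rw [Finset.sum_mul]
        refine Finset.sum_congr rfl (fun k _ => ?_)
        rw [ite_mul, zero_mul]
    _ = ∑ i : Fin n, x (P i) * y (P i) := by
        refine Finset.sum_congr rfl (fun i _ => ?_)
        rw [tail (i : ℕ) i.isLt, lev_fin]
    _ = ∑ j : Fin n, y j * x j := by
        rw [← Equiv.sum_comp P (fun j => y j * x j)]
        exact Finset.sum_congr rfl (fun i _ => mul_comm _ _)

/-- The key inequality: for `x ≥ 0` with consistent permutation `P`, the greedy
inner product for any permutation `Q` is at most the Lovász extension. -/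
lemma inner_grad_le (F : Finset (Fin n) → ℝ) (hsub : Submodular F) (h0 : F ∅ = 0)
    {x : Fin n → ℝ} (hx : ∀ i, 0 ≤ x i) {P : Equiv.Perm (Fin n)}
    (hP : Consistent x P) (Q : Equiv.Perm (Fin n)) :
    ∑ j : Fin n, lovaszGrad F Q j * x j ≤ lovaszExt F P x := by
  rw [lovaszExt_eq_sum, abel_sum P x (lovaszGrad F P), abel_sum P x (lovaszGrad F Q)]
  refine Finset.sum_le_sum (fun k hk => ?_)
  have hkn : k < n := Finset.mem_range.mp hk
  have hc : 0 ≤ lev P x k - lev P x (k + 1) := by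
    by_cases h : k + 1 < n
    · have := (hP ⟨k, hkn⟩ ⟨k + 1, h⟩ (by simp [Fin.le_def])).1
      rw [lev, lev, dif_pos hkn, dif_pos h]; linarith
    · rw [lev, lev, dif_pos hkn, dif_neg h]; simpa using hx _
  have h1 : ∑ j ∈ prefixSet P (k + 1), lovaszGrad F Q j ≤ F (prefixSet P (k + 1)) :=
    grad_sum_le F hsub h0 Q _
  have h2 : ∑ j ∈ prefixSet P (k + 1), lovaszGrad F P j = F (prefixSet P (k + 1)) :=
    grad_sum_prefix F P (Nat.succ_le_of_lt hkn) h0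
  rw [h2]
  exact mul_le_mul_of_nonneg_left (le_trans h1 (le_refl _)) hc

/-- Every vector admits a consistent permutation. -/
lemma exists_consistent (x : Fin n → ℝ) : ∃ P, Consistent x P := by
  have h := (Tuple.eq_sort_iff (f := fun i => -x i)
    (σ := Tuple.sort (fun i => -x i))).mp rfl
  set P := Tuple.sort (fun i => -x i)
  refine ⟨P, fun i j hij => ?_⟩
  constructor
  · have := h.1 hij
    simp only [Function.comp_apply] at this; linarith
  · intro heq
    rcases eq_or_lt_of_le hij with rfl | hlt
    · exact le_refl _
    · exact (h.2 i j hlt (by simp only [neg_inj]; exact heq)).le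

end LovaszAux

/-- The Lovász extension of a submodular function is convex on `[0,1]^n`. -/
theorem lovaszExt_convexOn {n : ℕ} (F : Finset (Fin n) → ℝ)
    (hsub : Submodular F) (h0 : F ∅ = 0)
    (f : (Fin n → ℝ) → ℝ)
    (hf : ∀ x : Fin n → ℝ, (∀ i, x i ∈ Set.Icc (0 : ℝ) 1) →
      ∀ P : Equiv.Perm (Fin n), Consistent x P → f x = lovaszExt F P x) :
    ConvexOn ℝ {x : Fin n → ℝ | ∀ i, x i ∈ Set.Icc (0 : ℝ) 1} f := by
  constructor
  · have hset : {x : Fin n → ℝ | ∀ i, x i ∈ Set.Icc (0 : ℝ) 1}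
        = Set.univ.pi (fun _ : Fin n => Set.Icc (0 : ℝ) 1) := by
      ext z
      simp only [Set.mem_setOf_eq, Set.mem_pi, Set.mem_univ, forall_true_left, true_implies]
    rw [hset]
    exact convex_pi (fun i _ => convex_Icc 0 1)
  · intro x hx y hy a b ha hb hab
    simp only [Set.mem_setOf_eq] at hx hy
    set z := a • x + b • y with hzdef
    have hzco : ∀ i, z i = a * x i + b * y i := by
      intro i; simp [hzdef]
    have hz : ∀ i, z i ∈ Set.Icc (0 : ℝ) 1 := by
      intro i
      have := (convex_Icc (0 : ℝ) 1) (hx i) (hy i) ha hb hab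
      simpa [hzco i] using this
    obtain ⟨P, hP⟩ := LovaszAux.exists_consistent z
    have hfz : f z = a * (∑ j : Fin n, lovaszGrad F P j * x j)
        + b * (∑ j : Fin n, lovaszGrad F P j * y j) := by
      rw [hf z hz P hP, LovaszAux.lovaszExt_eq_sum, Finset.mul_sum, Finset.mul_sum,
        ← Finset.sum_add_distrib]
      refine Finset.sum_congr rfl (fun j _ => ?_)
      rw [hzco j]; ring
    obtain ⟨Px, hPx⟩ := LovaszAux.exists_consistent x
    obtain ⟨Py, hPy⟩ := LovaszAux.exists_consistent y
    have hax : ∑ j : Fin n, lovaszGrad F P j * x j ≤ f x := by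
      rw [hf x hx Px hPx]
      exact LovaszAux.inner_grad_le F hsub h0 (fun i => (hx i).1) hPx P
    have hay : ∑ j : Fin n, lovaszGrad F P j * y j ≤ f y := by
      rw [hf y hy Py hPy]
      exact LovaszAux.inner_grad_le F hsub h0 (fun i => (hy i).1) hPy P
    calc f (a • x + b • y) = f z := by rw [hzdef]
      _ ≤ a * f x + b * f y :=
        hfz ▸ add_le_add (mul_le_mul_of_nonneg_left hax ha)
          (mul_le_mul_of_nonneg_left hay hb)
      _ = a • f x + b • f y := by simp [smul_eq_mul]
end

section
/- Biased ℓ₁-sampling estimator: Let u ∈ ℝ^n be non-zero, Γ > 0 a real, and S ⊆ [n] a set with Γ ≥ ‖u_S‖₁. Let Y_u be the random vector equal to Γ · sgn(u_i) · e_i where i is sampled from the distribution D_u(Γ,S). Then ‖E[Y_u] - u‖₁ = |Γ - ‖u‖₁| and ‖Y_u‖₂ = Γ almost surely. -/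
open MeasureTheory Finset

/-- `sgn v = 1` if `v ≥ 0` and `-1` otherwise. -/
noncomputable def sgn (v : ℝ) : ℝ := if 0 ≤ v then 1 else -1

lemma sgn_mul_abs (v : ℝ) : sgn v * |v| = v := by
  unfold sgn
  rcases le_or_gt 0 v with h | h
  · rw [if_pos h, abs_of_nonneg h, one_mul]
  · rw [if_neg (not_le.mpr h), abs_of_neg h]; ring

lemma sgn_sq (v : ℝ) : sgn v ^ 2 = 1 := by
  unfold sgn; split <;> norm_num

/-- **Biased ℓ₁-sampling estimator.** Let `Γ ≥ ‖u_S‖₁`, `Γ > 0`, and let `I` be a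
random index distributed as `D_u(Γ,S)`, i.e. `P(I = i) = |u_i|/Γ` for `i ∈ S` and
`P(I = i) = (1 - ‖u_S‖₁/Γ)·|u_i|/‖u_{Sᶜ}‖₁` for `i ∉ S`. Then
`Y = Γ · sgn(u_I) · e_I` satisfies `‖E[Y] - u‖₁ = |Γ - ‖u‖₁|` and `‖Y‖₂ = Γ` surely. -/
theorem biased_l1_sampling_estimator {n : ℕ} (u : Fin n → ℝ) (hu : u ≠ 0)
    (Γ : ℝ) (hΓ : 0 < Γ) (S : Finset (Fin n)) (hΓS : ∑ i ∈ S, |u i| ≤ Γ)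
    {Ω : Type*} [MeasurableSpace Ω] (μ : Measure Ω) [IsProbabilityMeasure μ]
    (I : Ω → Fin n) (hI : Measurable I)
    (hdist : ∀ i, μ {ω | I ω = i} = ENNReal.ofReal
      (if i ∈ S then |u i| / Γ
       else (1 - (∑ j ∈ S, |u j|) / Γ) * (|u i| / ∑ j ∈ Sᶜ, |u j|)))
    (Y : Ω → Fin n → ℝ)
    (hY : ∀ ω j, Y ω j = if j = I ω then Γ * sgn (u (I ω)) else 0) :
    (∑ j, |(∫ ω, Y ω j ∂μ) - u j| = abs (Γ - ∑ j, |u j|)) ∧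
      ∀ ω, Real.sqrt (∑ j, (Y ω j) ^ 2) = Γ := by
  set A := ∑ i ∈ S, |u i| with hA
  set B := ∑ i ∈ Sᶜ, |u i| with hB
  have hBnn : 0 ≤ B := Finset.sum_nonneg fun i _ => abs_nonneg _
  set p : Fin n → ℝ := fun i => if i ∈ S then |u i| / Γ
       else (1 - A / Γ) * (|u i| / B) with hp
  have hpnn : ∀ i, 0 ≤ p i := by
    intro i
    simp only [hp]
    split
    · positivity
    · apply mul_nonneg
      · have : A / Γ ≤ 1 := (div_le_one hΓ).mpr hΓS
        linarith
      · positivity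
  have hEY : ∀ j, (∫ ω, Y ω j ∂μ) = Γ * sgn (u j) * p j := by
    intro j
    have hmeas : MeasurableSet (I ⁻¹' {j}) := hI (measurableSet_singleton j)
    have heq : (fun ω => Y ω j) = Set.indicator (I ⁻¹' {j}) (fun _ => Γ * sgn (u j)) := by
      funext ω
      rw [hY]
      by_cases h : I ω = j
      · simp [Set.indicator, h]
      · rw [if_neg (fun hh => h hh.symm)]
        simp [Set.indicator, h]
    rw [heq, integral_indicator_const _ hmeas]
    have hμ : μ (I ⁻¹' {j}) = ENNReal.ofReal (p j) := hdist j
    rw [measureReal_def, hμ, ENNReal.toReal_ofReal (hpnn j)]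
    simp [smul_eq_mul]; ring
  have hsum1 : ∑ j, p j = 1 := by
    have h1 : ∑ j, μ (I ⁻¹' {j}) = 1 := by
      have := sum_measure_preimage_singleton (μ := μ) (Finset.univ : Finset (Fin n))
        (f := I) (fun b _ => hI (measurableSet_singleton b))
      simpa using this
    have h2 : ∑ j, μ (I ⁻¹' {j}) = ENNReal.ofReal (∑ j, p j) := by
      rw [ENNReal.ofReal_sum_of_nonneg (fun j _ => hpnn j)]
      exact Finset.sum_congr rfl fun j _ => hdist j
    rw [h2] at h1
    exact ENNReal.ofReal_eq_one.mp h1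
  have hpsum : ∑ j, p j = A / Γ + (1 - A / Γ) * (B / B) := by
    rw [← Finset.sum_add_sum_compl S p]
    congr 1
    · rw [hA, Finset.sum_div]
      exact Finset.sum_congr rfl fun j hj => by simp [hp, hj]
    · have h3 : ∑ i ∈ Sᶜ, p i = ∑ i ∈ Sᶜ, (1 - A / Γ) * (|u i| / B) :=
        Finset.sum_congr rfl fun j hj => by simp [hp, Finset.mem_compl.mp hj]
      rw [h3, ← Finset.mul_sum, ← Finset.sum_div]
  constructor
  · have hsplit := Finset.sum_add_sum_compl S (fun j => |(∫ ω, Y ω j ∂μ) - u j|)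
    rw [← hsplit]
    have hS0 : ∑ j ∈ S, |(∫ ω, Y ω j ∂μ) - u j| = 0 := by
      apply Finset.sum_eq_zero
      intro j hj
      rw [hEY j]
      have : Γ * sgn (u j) * p j = u j := by
        simp only [hp, if_pos hj]
        rw [show Γ * sgn (u j) * (|u j| / Γ) = sgn (u j) * |u j| * (Γ / Γ) by ring,
          div_self hΓ.ne', mul_one, sgn_mul_abs]
      rw [this, sub_self, abs_zero]
    rw [hS0, zero_add]
    have huA : ∑ j, |u j| = A + B := (Finset.sum_add_sum_compl S fun j => |u j|).symm
    by_cases hB0 : B = 0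
    · have hzero : ∀ j ∈ Sᶜ, u j = 0 := by
        intro j hj
        have := (Finset.sum_eq_zero_iff_of_nonneg (fun i _ => abs_nonneg (u i))).mp hB0 j hj
        exact abs_eq_zero.mp this
      have hAΓ : A = Γ := by
        rw [hpsum, hB0, div_zero, mul_zero, add_zero] at hsum1
        field_simp at hsum1
        linarith [hsum1]
      have hsumc : ∑ j ∈ Sᶜ, |(∫ ω, Y ω j ∂μ) - u j| = 0 := by
        apply Finset.sum_eq_zero
        intro j hj
        rw [hEY j]
        simp [hp, Finset.mem_compl.mp hj, hzero j hj, hB0]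
      rw [hsumc, huA, hAΓ, hB0]
      simp
    · have hBpos : 0 < B := lt_of_le_of_ne hBnn (Ne.symm hB0)
      have hterm : ∀ j ∈ Sᶜ, |(∫ ω, Y ω j ∂μ) - u j| = |u j| * (|Γ - A - B| / B) := by
        intro j hj
        rw [hEY j]
        simp only [hp, if_neg (Finset.mem_compl.mp hj)]
        have h1 : Γ * sgn (u j) * ((1 - A / Γ) * (|u j| / B)) - u j
            = (sgn (u j) * |u j|) * ((Γ - A) / B) - u j := by
          field_simp
        rw [h1, sgn_mul_abs]
        rw [show u j * ((Γ - A) / B) - u j = u j * ((Γ - A - B) / B) by field_simp]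
        rw [abs_mul, abs_div, abs_of_pos hBpos]
      rw [Finset.sum_congr rfl hterm, ← Finset.sum_mul, huA,
        show Γ - (A + B) = Γ - A - B from by ring, mul_comm,
        div_mul_cancel₀ _ hB0]
  · intro ω
    have hsum : ∑ j, (Y ω j) ^ 2 = Γ ^ 2 := by
      have : ∀ j, (Y ω j) ^ 2 = if j = I ω then (Γ * sgn (u (I ω))) ^ 2 else 0 := by
        intro j
        rw [hY]
        split <;> simp
      rw [Finset.sum_congr rfl fun j _ => this j]
      rw [Finset.sum_ite_eq' Finset.univ (I ω) (fun _ => (Γ * sgn (u (I ω))) ^ 2)]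
      simp [mul_pow, sgn_sq]
    rw [hsum, Real.sqrt_sq hΓ.le]
end

section
/- Sign constancy of subgradient differences on a cover block: Let F : 2^[n] → ℝ be submodular with F(∅) = 0 and Lovász subgradient g. Let x, y ∈ [0,1]^n with y ≥ x coordinatewise (or y ≤ x), and let {I_1,...,I_k} be a k-cover of (x,y). Then for each s ∈ [k], the differences g(y)_i - g(x)_i have the same sign for all i ∈ I_s; in particular |Σ_{i∈I_s} (g(y)_i - g(x)_i)| = Σ_{i∈I_s} |g(y)_i - g(x)_i|. -/
open Finset

/-- `I` is a `k`-cover of `(x, y)`: a partition of `[n]` whose blocks have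
consecutive preimages under both consistent permutations `P` (for `x`) and `Q`
(for `y`), and on whose non-singleton blocks `x` and `y` agree. -/
def IsCover {n k : ℕ} (x y : Fin n → ℝ) (P Q : Equiv.Perm (Fin n))
    (I : Fin k → Finset (Fin n)) : Prop :=
  (∀ s t : Fin k, s ≠ t → Disjoint (I s) (I t)) ∧
  (Finset.univ.biUnion I = Finset.univ) ∧
  (∀ s : Fin k, ∃ a b : ℕ, ∀ i : Fin n, P i ∈ I s ↔ a ≤ (i : ℕ) ∧ (i : ℕ) < b) ∧
  (∀ s : Fin k, ∃ a b : ℕ, ∀ i : Fin n, Q i ∈ I s ↔ a ≤ (i : ℕ) ∧ (i : ℕ) < b) ∧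
  (∀ s : Fin k, 1 < (I s).card → ∀ i ∈ I s, x i = y i)

lemma insert_prefixSet {n : ℕ} (P : Equiv.Perm (Fin n)) (i : Fin n) :
    insert i (prefixSet P (P.symm i : ℕ)) = prefixSet P ((P.symm i : ℕ) + 1) := by
  ext j
  simp only [Finset.mem_insert, mem_prefixSet, Nat.lt_succ_iff_lt_or_eq]
  constructor
  · rintro (rfl | h)
    · right; rfl
    · left; exact h
  · rintro (h | h)
    · right; exact h
    · left; have : P.symm j = P.symm i := Fin.ext h
      simpa using congrArg P this

lemma grad_le {n : ℕ} (F : Finset (Fin n) → ℝ) (hsub : Submodular F)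
    (x y : Fin n → ℝ) (P Q : Equiv.Perm (Fin n))
    (hP : Consistent x P) (hQ : Consistent y Q)
    (hxy : ∀ j, x j ≤ y j) (i : Fin n) (hi : x i = y i) :
    lovaszGrad F Q i ≤ lovaszGrad F P i := by
  have hAB : prefixSet P (P.symm i : ℕ) ⊆ prefixSet Q (Q.symm i : ℕ) := by
    intro j hj
    rw [mem_prefixSet] at hj ⊢
    have hji : j ≠ i := by
      intro h; subst h; exact lt_irrefl _ hj
    by_contra hcon
    push_neg at hcon
    have hle : Q.symm i ≤ Q.symm j := by
      exact Fin.le_def.mpr hcon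
    have hQij := hQ (Q.symm i) (Q.symm j) hle
    simp only [Equiv.apply_symm_apply] at hQij
    have hPle : P.symm j ≤ P.symm i := le_of_lt (Fin.lt_def.mpr hj)
    have hPij := hP (P.symm j) (P.symm i) hPle
    simp only [Equiv.apply_symm_apply] at hPij
    -- hPij : x j ≥ x i ∧ (x j = x i → j ≤ i)
    rcases eq_or_lt_of_le hPij.1 with heq | hlt
    · -- x i = x j, so j < i
      have hji' : j < i := lt_of_le_of_ne (hPij.2 heq.symm) hji
      have h1 : y i ≤ y j := by
        calc y i = x i := hi.symm
        _ ≤ x j := le_of_eq heq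
        _ ≤ y j := hxy j
      have h2 : y i = y j := le_antisymm h1 hQij.1
      have := hQij.2 h2
      exact absurd this (not_le.mpr hji')
    · -- x i < x j, so y i < y j, contradicting y i ≥ y j
      have : y i < y j := by
        calc y i = x i := hi.symm
        _ < x j := hlt
        _ ≤ y j := hxy j
      exact absurd hQij.1 (not_le.mpr this)
  have hiB : i ∉ prefixSet Q (Q.symm i : ℕ) := by
    rw [mem_prefixSet]; exact lt_irrefl _
  have := hsub hAB i hiB
  rw [insert_prefixSet, insert_prefixSet] at this
  unfold lovaszGrad
  linarith

/-- **Sign constancy of subgradient differences on a cover block.** If `y ≥ x` or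
`y ≤ x` coordinatewise and `{I_1,…,I_k}` is a `k`-cover of `(x,y)`, then on each
block the coordinates of `g(y) - g(x)` all have the same sign; in particular the
absolute value of their sum equals the sum of their absolute values. -/
theorem cover_sign_constancy {n k : ℕ} (F : Finset (Fin n) → ℝ)
    (hsub : Submodular F) (h0 : F ∅ = 0)
    (x y : Fin n → ℝ) (hx : ∀ i, x i ∈ Set.Icc (0 : ℝ) 1)
    (hy : ∀ i, y i ∈ Set.Icc (0 : ℝ) 1)
    (hmono : (∀ i, x i ≤ y i) ∨ (∀ i, y i ≤ x i))
    (P Q : Equiv.Perm (Fin n)) (hP : Consistent x P) (hQ : Consistent y Q)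
    (I : Fin k → Finset (Fin n)) (hI : IsCover x y P Q I) :
    ∀ s : Fin k,
      ((∀ i ∈ I s, 0 ≤ lovaszGrad F Q i - lovaszGrad F P i) ∨
        (∀ i ∈ I s, lovaszGrad F Q i - lovaszGrad F P i ≤ 0)) ∧
      |∑ i ∈ I s, (lovaszGrad F Q i - lovaszGrad F P i)|
        = ∑ i ∈ I s, |lovaszGrad F Q i - lovaszGrad F P i| := by
  intro s
  have key : (∀ i ∈ I s, 0 ≤ lovaszGrad F Q i - lovaszGrad F P i) ∨
      (∀ i ∈ I s, lovaszGrad F Q i - lovaszGrad F P i ≤ 0) := by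
    by_cases h : 1 < (I s).card
    · have heq := hI.2.2.2.2 s h
      rcases hmono with hm | hm
      · right; intro i hi
        have := grad_le F hsub x y P Q hP hQ hm i (heq i hi)
        linarith
      · left; intro i hi
        have := grad_le F hsub y x Q P hQ hP hm i (heq i hi).symm
        linarith
    · push_neg at h
      have hone := Finset.card_le_one.mp h
      rcases (I s).eq_empty_or_nonempty with he | ⟨a, ha⟩
      · left; intro i hi; rw [he] at hi; exact absurd hi (Finset.notMem_empty i)
      · rcases le_total 0 (lovaszGrad F Q a - lovaszGrad F P a) with hd | hd
        · left; intro i hi; rwa [hone i hi a ha]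
        · right; intro i hi; rwa [hone i hi a ha]
  refine ⟨key, ?_⟩
  rcases key with hpos | hneg
  · rw [abs_of_nonneg (Finset.sum_nonneg hpos)]
    exact Finset.sum_congr rfl fun i hi => (abs_of_nonneg (hpos i hi)).symm
  · rw [abs_of_nonpos (Finset.sum_nonpos hneg), ← Finset.sum_neg_distrib]
    exact Finset.sum_congr rfl fun i hi => (abs_of_nonpos (hneg i hi)).symm
end

section
/- Total variation bound for D_u(Γ,S): Let u ∈ ℝ^n be non-zero, Γ > 0, and S ⊆ [n] with Γ ≥ ‖u_S‖₁ and ‖u_{[n]∖S}‖₁ > 0. Then the total variation distance between D_u(Γ,S) and D_u = (|u_1|/‖u‖₁, ..., |u_n|/‖u‖₁) is at most |Γ - ‖u‖₁| / min(Γ, ‖u‖₁). -/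
open Finset

/-- **Total variation bound for `D_u(Γ,S)`.** The total variation distance between
`D_u(Γ,S)` and `D_u = (|u_i|/‖u‖₁)_i` is at most `|Γ - ‖u‖₁| / min(Γ, ‖u‖₁)`. -/
theorem tv_bound_Du_Gamma_S {n : ℕ} (u : Fin n → ℝ) (hu : u ≠ 0)
    (Γ : ℝ) (hΓ : 0 < Γ) (S : Finset (Fin n))
    (hΓS : ∑ i ∈ S, |u i| ≤ Γ) (hSc : 0 < ∑ i ∈ Sᶜ, |u i|)
    (p : Fin n → ℝ)
    (hp : ∀ i, p i = if i ∈ S then |u i| / Γ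
      else (1 - (∑ j ∈ S, |u j|) / Γ) * (|u i| / ∑ j ∈ Sᶜ, |u j|)) :
    (1 / 2) * ∑ i, abs (p i - |u i| / ∑ j, |u j|)
      ≤ abs (Γ - ∑ j, |u j|) / min Γ (∑ j, |u j|) := by
  set A := ∑ i ∈ S, |u i| with hA
  set B := ∑ i ∈ Sᶜ, |u i| with hB
  set T := ∑ j, |u j| with hTdef
  have hT : T = A + B := by
    rw [hTdef, hA, hB, Finset.sum_add_sum_compl]
  have hA0 : 0 ≤ A := Finset.sum_nonneg fun i _ => abs_nonneg _
  have hTpos : 0 < T := by rw [hT]; linarith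
  have hAT : A ≤ T := by rw [hT]; linarith
  have hΓne : Γ ≠ 0 := ne_of_gt hΓ
  have hTne : T ≠ 0 := ne_of_gt hTpos
  have hBne : B ≠ 0 := ne_of_gt hSc
  have keyS : ∀ i ∈ S, |p i - |u i| / T| = |u i| * (|Γ - T| / (Γ * T)) := by
    intro i hi
    rw [hp i, if_pos hi]
    have h1 : |u i| / Γ - |u i| / T = |u i| * ((T - Γ) / (Γ * T)) := by
      field_simp
    rw [h1, abs_mul, abs_abs, abs_div, abs_of_pos (mul_pos hΓ hTpos),
      abs_sub_comm]
  have keyC : ∀ i ∈ Sᶜ, |p i - |u i| / T| = |u i| * (A * |Γ - T| / (Γ * B * T)) := by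
    intro i hi
    rw [hp i, if_neg (by simpa using hi)]
    have h1 : (1 - A / Γ) * (|u i| / B) - |u i| / T
        = |u i| * (A * (Γ - T) / (Γ * B * T)) := by
      field_simp
      linear_combination (Γ * |u i|) * hT
    rw [h1, abs_mul, abs_abs, abs_div, abs_of_pos (mul_pos (mul_pos hΓ hSc) hTpos),
      abs_mul, abs_of_nonneg hA0]
  have hsum : ∑ i, |p i - |u i| / T| = 2 * (A * |Γ - T| / (Γ * T)) := by
    rw [← Finset.sum_add_sum_compl S, Finset.sum_congr rfl keyS,
      Finset.sum_congr rfl keyC, ← Finset.sum_mul, ← Finset.sum_mul,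
      ← hA, ← hB]
    field_simp
    ring
  rw [hsum]
  have h2 : (1:ℝ) / 2 * (2 * (A * |Γ - T| / (Γ * T))) = A * |Γ - T| / (Γ * T) := by ring
  rw [h2]
  have hminpos : 0 < min Γ T := lt_min hΓ hTpos
  rw [div_le_div_iff₀ (mul_pos hΓ hTpos) hminpos]
  have habs : 0 ≤ |Γ - T| := abs_nonneg _
  rcases le_total Γ T with h | h
  · rw [min_eq_left h]
    nlinarith [mul_nonneg (mul_nonneg habs hΓ.le) (sub_nonneg.2 hAT)]
  · rw [min_eq_right h]
    nlinarith [mul_nonneg (mul_nonneg habs hTpos.le) (sub_nonneg.2 hΓS)]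
end

section
/- Expected cost bound for the mixture sampler: Let u ∈ ℝ^n be non-zero, T ≥ 2 an integer with T < n, Γ > 0 with |Γ - ‖u‖₁| ≤ ‖u‖₁/√T, and S = {i : |u_i| ≥ Γ/T} with ‖u_{[n]∖S}‖₁ > 0. Suppose sampling from S costs 1 and sampling from [n]∖S costs c·√(n·‖u_{[n]∖S}‖_∞ / ‖u_{[n]∖S}‖₁) for a constant c. Then the expected cost of T iterations of the mixture (branch into S with probability ‖u_S‖₁/Γ, else into [n]∖S) is at most T·(‖u_S‖₁/Γ) + T·(1 - ‖u_S‖₁/Γ)·c·√(n·‖u_{[n]∖S}‖_∞/‖u_{[n]∖S}‖₁) ≤ T + c'·√(Tn) for some constant c' depending only on c. -/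
open Finset

set_option maxHeartbeats 800000

/-- **Expected cost bound for the mixture sampler.** Suppose one sample from `S`
costs `1` and one sample from `Sᶜ` costs `c·√(n‖u_{Sᶜ}‖_∞/‖u_{Sᶜ}‖₁)`. If
`|Γ - ‖u‖₁| ≤ ‖u‖₁/√T` and `S = {i : |u_i| ≥ Γ/T}` with `‖u_{Sᶜ}‖₁ > 0`, then the
expected cost of `T` mixture iterations,
`T·(‖u_S‖₁/Γ) + T·(1-‖u_S‖₁/Γ)·c·√(n‖u_{Sᶜ}‖_∞/‖u_{Sᶜ}‖₁)`, is at most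
`T + c'·√(Tn)` for a constant `c'` depending only on `c`. -/
theorem mixture_sampler_expected_cost (c : ℝ) (hc : 0 < c) :
    ∃ c' : ℝ, 0 < c' ∧
      ∀ (n T : ℕ) (u : Fin n → ℝ) (Γ : ℝ) (S : Finset (Fin n)),
        u ≠ 0 → 2 ≤ T → T < n → 0 < Γ →
        abs (Γ - ∑ i, |u i|) ≤ (∑ i, |u i|) / Real.sqrt T →
        S = Finset.univ.filter (fun i : Fin n => Γ / T ≤ |u i|) →
        0 < ∑ i ∈ Sᶜ, |u i| →
        (T : ℝ) * ((∑ i ∈ S, |u i|) / Γ)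
            + (T : ℝ) * (1 - (∑ i ∈ S, |u i|) / Γ) * c *
              Real.sqrt ((n : ℝ) * (⨆ i ∈ Sᶜ, |u i|) / ∑ i ∈ Sᶜ, |u i|)
          ≤ (T : ℝ) + c' * Real.sqrt ((T : ℝ) * n) := by
  refine ⟨4 + 6 * c, by linarith, ?_⟩
  intro n T u Γ S hu hT hTn hΓ happ hS hB
  set L := ∑ i, |u i| with hLdef
  set A := ∑ i ∈ S, |u i| with hAdef
  set B := ∑ i ∈ Sᶜ, |u i| with hBdef
  set M := ⨆ i ∈ Sᶜ, |u i| with hMdef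
  have hTR : (2:ℝ) ≤ (T:ℝ) := by exact_mod_cast hT
  have hT0 : (0:ℝ) < T := by linarith
  have hn0 : (0:ℝ) ≤ (n:ℝ) := Nat.cast_nonneg n
  have hTn' : (T:ℝ) ≤ (n:ℝ) := by exact_mod_cast hTn.le
  have hs0 : 0 < Real.sqrt T := Real.sqrt_pos.mpr hT0
  have hsq : Real.sqrt T * Real.sqrt T = (T:ℝ) := Real.mul_self_sqrt hT0.le
  have hs43 : (4/3:ℝ) ≤ Real.sqrt T := by
    have h1 : Real.sqrt (16/9 : ℝ) ≤ Real.sqrt T := Real.sqrt_le_sqrt (by linarith)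
    rwa [show (16/9:ℝ) = (4/3)^2 by norm_num, Real.sqrt_sq (by norm_num)] at h1
  have hAB : A + B = L := Finset.sum_add_sum_compl S _
  have hA0 : 0 ≤ A := Finset.sum_nonneg fun i _ => abs_nonneg _
  have hL0 : 0 < L := by linarith
  obtain ⟨h1, h2⟩ := abs_sub_le_iff.mp happ
  have k1 : (Γ - L) * Real.sqrt T ≤ L := by rw [← le_div_iff₀ hs0]; exact h1
  have k2 : (L - Γ) * Real.sqrt T ≤ L := by rw [← le_div_iff₀ hs0]; exact h2
  have hL4 : L ≤ 4 * Γ := by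
    rcases le_or_gt L Γ with h | h
    · linarith
    · have h3 : (L - Γ) * (4/3) ≤ (L - Γ) * Real.sqrt T :=
        mul_le_mul_of_nonneg_left hs43 (by linarith)
      linarith
  have hBL : B ≤ L := by linarith
  -- sup bounds
  have hMnn : 0 ≤ M := Real.iSup_nonneg fun i => Real.iSup_nonneg fun _ => abs_nonneg _
  have hcomp : ∀ i ∈ Sᶜ, |u i| < Γ / T := by
    intro i hi
    rw [Finset.mem_compl, hS, Finset.mem_filter] at hi
    push_neg at hi
    exact hi (Finset.mem_univ i)
  have hMle : ∀ x : ℝ, 0 ≤ x → (∀ i ∈ Sᶜ, |u i| ≤ x) → M ≤ x := by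
    intro x hx0 hx
    exact Real.iSup_le (fun i => Real.iSup_le (fun hi => hx i hi) hx0) hx0
  have hMΓ : M ≤ Γ / T := hMle _ (by positivity) fun i hi => (hcomp i hi).le
  have hMB : M ≤ B := hMle _ hB.le fun i hi =>
    Finset.single_le_sum (fun j _ => abs_nonneg (u j)) hi
  have hMT : M * T ≤ Γ := by rw [← le_div_iff₀ hT0]; exact hMΓ
  set R := Real.sqrt ((n:ℝ) * M / B) with hRdef
  have hR0 : 0 ≤ R := Real.sqrt_nonneg _
  have hRn : R ≤ Real.sqrt n := by
    apply Real.sqrt_le_sqrt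
    rw [div_le_iff₀ hB]
    exact mul_le_mul_of_nonneg_left hMB hn0
  -- Step 1 : first term
  have k3 : L * Real.sqrt T ≤ Γ * Real.sqrt T + 4 * Γ := by nlinarith [k2, hL4]
  have k4 : L * T ≤ Γ * T + 4 * Γ * Real.sqrt T := by
    have h := mul_le_mul_of_nonneg_right k3 hs0.le
    calc L * T = L * (Real.sqrt T * Real.sqrt T) := by rw [hsq]
      _ = L * Real.sqrt T * Real.sqrt T := by ring
      _ ≤ (Γ * Real.sqrt T + 4 * Γ) * Real.sqrt T := h
      _ = Γ * (Real.sqrt T * Real.sqrt T) + 4 * Γ * Real.sqrt T := by ring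
      _ = Γ * T + 4 * Γ * Real.sqrt T := by rw [hsq]
  have step1 : (T:ℝ) * (A / Γ) ≤ T + 4 * Real.sqrt T := by
    rw [mul_div_assoc', div_le_iff₀ hΓ]
    have hTA : (T:ℝ) * A ≤ (T:ℝ) * L := mul_le_mul_of_nonneg_left (by linarith) hT0.le
    have e : ((T:ℝ) + 4 * Real.sqrt T) * Γ = Γ * T + 4 * Γ * Real.sqrt T := by ring
    have e2 : (T:ℝ) * L = L * T := by ring
    linarith
  -- Step 2 : second term
  have hD : 1 - A / Γ ≤ B / Γ + 4 / Real.sqrt T := by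
    have e1 : Γ - L ≤ 4 * Γ / Real.sqrt T := by
      rw [le_div_iff₀ hs0]; linarith
    calc 1 - A / Γ = (Γ - A) / Γ := by field_simp
      _ ≤ (B + 4 * Γ / Real.sqrt T) / Γ := by gcongr; linarith
      _ = B / Γ + 4 / Real.sqrt T := by
          rw [add_div, mul_div_right_comm, mul_div_cancel_right₀ _ hΓ.ne']
  have hP1 : B / Γ * R ≤ Real.sqrt (4 * (n:ℝ) / T) := by
    rw [hRdef, ← Real.sqrt_sq (show (0:ℝ) ≤ B / Γ by positivity),
      ← Real.sqrt_mul (by positivity)]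
    apply Real.sqrt_le_sqrt
    have e : (B / Γ) ^ 2 * ((n:ℝ) * M / B) = (n:ℝ) * M * B / Γ ^ 2 := by
      field_simp
    rw [e, div_le_div_iff₀ (by positivity) hT0]
    calc (n:ℝ) * M * B * T = ((n:ℝ) * B) * (M * T) := by ring
      _ ≤ ((n:ℝ) * B) * Γ := mul_le_mul_of_nonneg_left hMT (by positivity)
      _ = ((n:ℝ) * Γ) * B := by ring
      _ ≤ ((n:ℝ) * Γ) * (4 * Γ) := mul_le_mul_of_nonneg_left (hBL.trans hL4) (by positivity)
      _ = 4 * (n:ℝ) * Γ ^ 2 := by ring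
  have key2 : Real.sqrt (4 * (n:ℝ) / T) = (2 / (T:ℝ)) * Real.sqrt ((T:ℝ) * n) := by
    rw [← Real.sqrt_sq (show (0:ℝ) ≤ 2 / (T:ℝ) by positivity),
      ← Real.sqrt_mul (by positivity)]
    congr 1
    field_simp
    ring
  have hTs : (T:ℝ) / Real.sqrt T = Real.sqrt T := by
    rw [div_eq_iff hs0.ne']; exact hsq.symm
  have hsTn : Real.sqrt T * Real.sqrt n = Real.sqrt ((T:ℝ) * n) := (Real.sqrt_mul hT0.le n).symm
  have step2 : (T:ℝ) * (1 - A / Γ) * c * R ≤ 6 * c * Real.sqrt ((T:ℝ) * n) := by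
    have b1 : (T:ℝ) * (1 - A / Γ) * c * R ≤ (T:ℝ) * (B / Γ + 4 / Real.sqrt T) * c * R := by
      calc (T:ℝ) * (1 - A / Γ) * c * R = (1 - A / Γ) * ((T:ℝ) * c * R) := by ring
        _ ≤ (B / Γ + 4 / Real.sqrt T) * ((T:ℝ) * c * R) :=
            mul_le_mul_of_nonneg_right hD (by positivity)
        _ = (T:ℝ) * (B / Γ + 4 / Real.sqrt T) * c * R := by ring
    have b2 : (T:ℝ) * (B / Γ + 4 / Real.sqrt T) * c * R
        = c * ((T:ℝ) * (B / Γ * R)) + (4 * c) * (((T:ℝ) / Real.sqrt T) * R) := by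
      ring
    have b3 : c * ((T:ℝ) * (B / Γ * R)) ≤ c * ((T:ℝ) * ((2 / (T:ℝ)) * Real.sqrt ((T:ℝ) * n))) := by
      rw [← key2]
      gcongr
    have b4 : c * ((T:ℝ) * ((2 / (T:ℝ)) * Real.sqrt ((T:ℝ) * n))) = 2 * (c * Real.sqrt ((T:ℝ) * n)) := by
      field_simp
    have b5 : (4 * c) * (((T:ℝ) / Real.sqrt T) * R) ≤ 4 * (c * Real.sqrt ((T:ℝ) * n)) := by
      rw [hTs, ← hsTn]
      have h6 : Real.sqrt (T:ℝ) * R ≤ Real.sqrt (T:ℝ) * Real.sqrt n :=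
        mul_le_mul_of_nonneg_left hRn hs0.le
      calc (4 * c) * (Real.sqrt (T:ℝ) * R) ≤ (4 * c) * (Real.sqrt (T:ℝ) * Real.sqrt n) :=
            mul_le_mul_of_nonneg_left h6 (by positivity)
        _ = 4 * (c * (Real.sqrt (T:ℝ) * Real.sqrt n)) := by ring
    linarith [b1, b3, b5, b2.le, b2.ge, b4.le, b4.ge]
  have hstn : Real.sqrt T ≤ Real.sqrt ((T:ℝ) * n) := by
    apply Real.sqrt_le_sqrt
    nlinarith
  have hstn0 : 0 ≤ Real.sqrt ((T:ℝ) * n) := Real.sqrt_nonneg _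
  have hcs : 0 ≤ c * Real.sqrt ((T:ℝ) * n) := by positivity
  linarith [step1, step2, hstn, hcs]
end
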